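/- Let n ≥ 4 and let t be a nonnegative integer. If there exist an integer k ≥ 1, reals a_1,...,a_k > 0, integers 0 ≤ s_i ≤ n-1 and reals W_1,...,W_k > 0 forming a weighted spherical t-design of generalized corner-vector type on S^{n-1}, then t ≤ 15. -/

import Mathlib

open MeasureTheory
open scoped ENNReal NNReal

/-- The generalized corner vector `v_{a,s} = (a^2+s)^{-1/2} (a,1,...,1,0,...,0)`
(with `s` ones after the first coordinate `a`) in `ℝ^n`. -/
noncomputable def cornerVec (n : ℕ) (a : ℝ) (s : ℕ) : EuclideanSpace ℝ (Fin n) :=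
  WithLp.toLp 2 (fun i => (Real.sqrt (a ^ 2 + s))⁻¹ *
    (if (i : ℕ) = 0 then a else if (i : ℕ) ≤ s then 1 else 0))

/-- The orbit `v_{a,s}^{B_n}` of the generalized corner vector under the
hyperoctahedral group (coordinate permutations and sign changes). -/
noncomputable def cornerOrbit (n : ℕ) (a : ℝ) (s : ℕ) : Finset (EuclideanSpace ℝ (Fin n)) :=
  @Finset.image _ _ (Classical.decEq _)
    (fun p : Equiv.Perm (Fin n) × (Fin n → Bool) =>
      (WithLp.toLp 2 (fun i => (if p.2 i then (-1 : ℝ) else 1) * cornerVec n a s (p.1 i)) :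
        EuclideanSpace ℝ (Fin n)))
    Finset.univ

/-- The average `(1/|S^{n-1}|) ∫_{S^{n-1}} f dρ` of a polynomial over the unit sphere,
with respect to the surface ((n-1)-dimensional Hausdorff) measure. -/
noncomputable def sphereAvg (n : ℕ) (f : MvPolynomial (Fin n) ℝ) : ℝ :=
  ⨍ x in Metric.sphere (0 : EuclideanSpace ℝ (Fin n)) 1,
    MvPolynomial.eval (fun i => x i) f ∂ μH[(n : ℝ) - 1]

/-- The sum `Σ_{x ∈ v_{a,s}^{B_n}} f(x)`. -/
noncomputable def orbitSum (n : ℕ) (a : ℝ) (s : ℕ) (f : MvPolynomial (Fin n) ℝ) : ℝ :=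
  ∑ y ∈ cornerOrbit n a s, MvPolynomial.eval (fun i => y i) f

/-- A weighted spherical `t`-design of generalized corner-vector type on `S^{n-1}`:
the spherical average of every polynomial of total degree at most `t` equals the
weighted sum over the orbits `v_{a_i,s_i}^{B_n}` with weights `W_i`. -/
def isDesign (n t k : ℕ) (a : Fin k → ℝ) (s : Fin k → ℕ) (W : Fin k → ℝ) : Prop :=
  ∀ f : MvPolynomial (Fin n) ℝ, f.totalDegree ≤ t →
    sphereAvg n f = ∑ i, W i * orbitSum n (a i) (s i) f

namespace DegreeBoundAux

open MvPolynomial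

/-! ### The obstruction polynomial -/

noncomputable def Gp {n : ℕ} (i j : Fin n) : MvPolynomial (Fin n) ℝ :=
  X i * X j * (X i ^ 2 - X j ^ 2)

noncomputable def Fp {n : ℕ} (i0 i1 i2 i3 : Fin n) : MvPolynomial (Fin n) ℝ :=
  (Gp i0 i1 * Gp i2 i3) ^ 2 + (Gp i0 i2 * Gp i1 i3) ^ 2 + (Gp i0 i3 * Gp i1 i2) ^ 2

lemma Gp_totalDegree {n : ℕ} (i j : Fin n) : (Gp i j).totalDegree ≤ 4 := by
  unfold Gp
  calc ((X i * X j * (X i ^ 2 - X j ^ 2) : MvPolynomial (Fin n) ℝ)).totalDegree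
      ≤ ((X i * X j : MvPolynomial (Fin n) ℝ)).totalDegree +
        ((X i ^ 2 - X j ^ 2 : MvPolynomial (Fin n) ℝ)).totalDegree :=
        totalDegree_mul _ _
    _ ≤ 4 := by
        have h1 : (X i * (X j : MvPolynomial (Fin n) ℝ)).totalDegree ≤ 2 :=
          (totalDegree_mul _ _).trans (by simp [totalDegree_X])
        have h2 : ((X i ^ 2 - X j ^ 2 : MvPolynomial (Fin n) ℝ)).totalDegree ≤ 2 := by
          refine (totalDegree_sub _ _).trans ?_
          simp [totalDegree_pow, totalDegree_X]
        omega

lemma Fp_totalDegree {n : ℕ} (i0 i1 i2 i3 : Fin n) : (Fp i0 i1 i2 i3).totalDegree ≤ 16 := by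
  unfold Fp
  have key : ∀ a b c d : Fin n, ((Gp a b * Gp c d) ^ 2).totalDegree ≤ 16 := by
    intro a b c d
    refine (totalDegree_pow _ _).trans ?_
    have := (totalDegree_mul (Gp a b) (Gp c d)).trans
      (add_le_add (Gp_totalDegree a b) (Gp_totalDegree c d))
    omega
  refine (totalDegree_add _ _).trans ?_
  exact max_le ((totalDegree_add _ _).trans (max_le (key _ _ _ _) (key _ _ _ _))) (key _ _ _ _)

lemma eval_Fp {n : ℕ} (i0 i1 i2 i3 : Fin n) (x : Fin n → ℝ) :
    eval x (Fp i0 i1 i2 i3) =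
      (x i0 * x i1 * (x i0 ^ 2 - x i1 ^ 2) * (x i2 * x i3 * (x i2 ^ 2 - x i3 ^ 2))) ^ 2 +
      (x i0 * x i2 * (x i0 ^ 2 - x i2 ^ 2) * (x i1 * x i3 * (x i1 ^ 2 - x i3 ^ 2))) ^ 2 +
      (x i0 * x i3 * (x i0 ^ 2 - x i3 ^ 2) * (x i1 * x i2 * (x i1 ^ 2 - x i2 ^ 2))) ^ 2 := by
  simp [Fp, Gp]

lemma Fp_nonneg {n : ℕ} (i0 i1 i2 i3 : Fin n) (x : Fin n → ℝ) :
    0 ≤ eval x (Fp i0 i1 i2 i3) := by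
  rw [eval_Fp]; positivity

/-! ### The obstruction polynomial vanishes on every corner orbit -/

lemma eval_Fp_orbit {n : ℕ} {a : ℝ} {s : ℕ} {i0 i1 i2 i3 : Fin n}
    (h01 : i0 ≠ i1) (h02 : i0 ≠ i2) (h03 : i0 ≠ i3) (h12 : i1 ≠ i2) (h13 : i1 ≠ i3)
    (h23 : i2 ≠ i3) {y : EuclideanSpace ℝ (Fin n)} (hy : y ∈ cornerOrbit n a s) :
    eval (fun i => y i) (Fp i0 i1 i2 i3) = 0 := by
  classical
  obtain ⟨⟨p, ε⟩, -, rfl⟩ := (@Finset.mem_image _ _ (Classical.decEq _) _ _ _).1 hy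
  simp only [WithLp.ofLp_toLp]
  set r : ℝ := (Real.sqrt (a ^ 2 + s))⁻¹ with hr
  set y : Fin n → ℝ := fun i => (if ε i then (-1 : ℝ) else 1) * cornerVec n a s (p i) with hy'
  have hn : 0 < n := lt_of_le_of_lt (Nat.zero_le _) i0.isLt
  set z : Fin n := ⟨0, hn⟩ with hz
  have claim : ∀ i : Fin n, p i ≠ z → y i = 0 ∨ y i ^ 2 = r ^ 2 := by
    intro i hi
    have hv : (p i : ℕ) ≠ 0 := by
      intro h0
      exact hi (Fin.ext h0)
    have : cornerVec n a s (p i) = r * (if ((p i : ℕ)) ≤ s then 1 else 0) := by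
      simp [cornerVec, hv, hr]
    by_cases hle : ((p i : ℕ)) ≤ s
    · right
      rw [hy']
      simp only [this, hle, if_true, mul_one]
      rcases Bool.eq_false_or_eq_true (ε i) with h | h <;> simp [h]
    · left
      rw [hy']
      simp [this, hle]
  have key : ∀ i j : Fin n, p i ≠ z → p j ≠ z →
      y i * y j * (y i ^ 2 - y j ^ 2) = 0 := by
    intro i j hi hj
    rcases claim i hi with h | h
    · rw [h]; ring
    · rcases claim j hj with h' | h'
      · rw [h']; ring
      · rw [h, h']; ring
  have key2 : ∀ i j k l : Fin n, i ≠ k → i ≠ l → j ≠ k → j ≠ l →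
      y i * y j * (y i ^ 2 - y j ^ 2) * (y k * y l * (y k ^ 2 - y l ^ 2)) = 0 := by
    intro i j k l hik hil hjk hjl
    by_cases hi : p i = z
    · have hk : p k ≠ z := fun h => hik (p.injective (hi.trans h.symm))
      have hl : p l ≠ z := fun h => hil (p.injective (hi.trans h.symm))
      rw [key k l hk hl]; ring
    · by_cases hj : p j = z
      · have hk : p k ≠ z := fun h => hjk (p.injective (hj.trans h.symm))
        have hl : p l ≠ z := fun h => hjl (p.injective (hj.trans h.symm))
        rw [key k l hk hl]; ring
      · rw [key i j hi hj]; ring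
  rw [eval_Fp]
  rw [key2 i0 i1 i2 i3 h02 h03 h12 h13, key2 i0 i2 i1 i3 h01.symm.symm h03 h12.symm h23,
    key2 i0 i3 i1 i2 h01 h02 h13.symm h23.symm]
  norm_num

/-! ### Continuity of polynomial evaluation -/

lemma cont_eval {n : ℕ} (f : MvPolynomial (Fin n) ℝ) {X : Type*} [TopologicalSpace X]
    (g : X → EuclideanSpace ℝ (Fin n)) (hg : ∀ i, Continuous fun x => g x i) :
    Continuous fun x => eval (fun i => g x i) f := by
  apply MvPolynomial.induction_on f
  · intro a; simpa using continuous_const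
  · intro p q hp hq; simp only [map_add]; exact hp.add hq
  · intro p i hp
    simp only [eval_mul, eval_X]
    exact hp.mul (hg i)

/-! ### A chart for the sphere -/

noncomputable def gmap (m : ℕ) (w : EuclideanSpace ℝ (Fin m)) :
    EuclideanSpace ℝ (Fin (m + 1)) :=
  WithLp.toLp 2 (fun i => Fin.snoc (α := fun _ => ℝ) (fun j => w j) (Real.sqrt (1 - ∑ j, w j ^ 2)) i)

lemma gmap_castSucc (m : ℕ) (w : EuclideanSpace ℝ (Fin m)) (j : Fin m) :
    gmap m w (Fin.castSucc j) = w j := by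
  simp [gmap]

lemma gmap_last (m : ℕ) (w : EuclideanSpace ℝ (Fin m)) :
    gmap m w (Fin.last m) = Real.sqrt (1 - ∑ j, w j ^ 2) := by
  simp [gmap]

lemma gmap_antilipschitz (m : ℕ) : AntilipschitzWith 1 (gmap m) := by
  apply AntilipschitzWith.of_le_mul_dist
  intro x y
  rw [NNReal.coe_one, one_mul, EuclideanSpace.dist_eq, EuclideanSpace.dist_eq]
  apply Real.sqrt_le_sqrt
  rw [Fin.sum_univ_castSucc]
  simp only [gmap_castSucc]
  exact le_add_of_nonneg_right (sq_nonneg _)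

lemma gmap_mem_sphere (m : ℕ) (w : EuclideanSpace ℝ (Fin m))
    (hw : ∑ j, w j ^ 2 ≤ 1) :
    gmap m w ∈ Metric.sphere (0 : EuclideanSpace ℝ (Fin (m+1))) 1 := by
  rw [mem_sphere_zero_iff_norm, EuclideanSpace.norm_eq]
  have : ∑ i, ‖gmap m w i‖ ^ 2 = 1 := by
    rw [Fin.sum_univ_castSucc]
    simp only [gmap_castSucc, gmap_last, Real.norm_eq_abs, sq_abs]
    rw [Real.sq_sqrt (by linarith)]
    ring
  rw [this, Real.sqrt_one]

lemma gmap_continuous_coord (m : ℕ) (i : Fin (m + 1)) :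
    Continuous fun w : EuclideanSpace ℝ (Fin m) => gmap m w i := by
  have hsum : Continuous fun w : EuclideanSpace ℝ (Fin m) => ∑ j, w j ^ 2 :=
    continuous_finset_sum _ fun j _ => ((continuous_apply j).comp (PiLp.continuous_ofLp 2 _)).pow 2
  induction i using Fin.lastCases with
  | last =>
    simp only [gmap_last]
    exact Real.continuous_sqrt.comp (continuous_const.sub hsum)
  | cast j =>
    simp only [gmap_castSucc]
    exact (continuous_apply j).comp (PiLp.continuous_ofLp 2 _)

/-! ### The base point -/

noncomputable def w0 (m : ℕ) : EuclideanSpace ℝ (Fin m) :=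
  WithLp.toLp 2 (fun j => (1 / 2 : ℝ) ^ ((j : ℕ) + 1))

lemma w0_sum_le (m : ℕ) : ∑ j, w0 m j ^ 2 ≤ 1 / 2 := by
  have h1 : ∀ j : Fin m, w0 m j ^ 2 ≤ (1/4 : ℝ) * (1/2) ^ (j : ℕ) := by
    intro j
    simp only [w0, WithLp.ofLp_toLp]
    rw [← pow_mul]
    have : ((1:ℝ)/2) ^ (((j : ℕ) + 1) * 2) = (1/4) * ((1/4) ^ (j:ℕ)) := by
      rw [show ((j:ℕ) + 1) * 2 = 2 * (j:ℕ) + 2 by ring, pow_add, pow_mul]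
      norm_num
      ring
    rw [this]
    have : ((1:ℝ)/4) ^ (j:ℕ) ≤ (1/2) ^ (j:ℕ) := by
      apply pow_le_pow_left₀ (by norm_num) (by norm_num)
    nlinarith
  have h2 : ∑ j, w0 m j ^ 2 ≤ ∑ j : Fin m, (1/4 : ℝ) * (1/2) ^ (j:ℕ) :=
    Finset.sum_le_sum fun j _ => h1 j
  have h3 : ∑ j : Fin m, (1/4 : ℝ) * (1/2) ^ (j:ℕ) = (1/4) * ∑ j : Fin m, ((1:ℝ)/2) ^ (j:ℕ) := by
    rw [Finset.mul_sum]
  have h4 : ∑ j : Fin m, ((1:ℝ)/2) ^ (j:ℕ) ≤ 2 := by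
    rw [Fin.sum_univ_eq_sum_range]
    exact sum_geometric_two_le m
  linarith

lemma phi_w0_pos (m : ℕ) (hm : 3 ≤ m) :
    0 < eval (fun i => gmap m (w0 m) i)
      (Fp (⟨0, by omega⟩ : Fin (m+1)) ⟨1, by omega⟩ ⟨2, by omega⟩ ⟨3, by omega⟩) := by
  have hcoord : ∀ (j : ℕ) (hj : j < m),
      gmap m (w0 m) (⟨j, by omega⟩ : Fin (m+1)) = (1/2 : ℝ) ^ (j + 1) := by
    intro j hj
    have : (⟨j, by omega⟩ : Fin (m+1)) = Fin.castSucc ⟨j, hj⟩ := rfl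
    rw [this, gmap_castSucc]
    simp [w0]
  have hx0 : gmap m (w0 m) (⟨0, by omega⟩ : Fin (m+1)) = 1/2 := by
    rw [hcoord 0 (by omega)]; norm_num
  have hx1 : gmap m (w0 m) (⟨1, by omega⟩ : Fin (m+1)) = 1/4 := by
    rw [hcoord 1 (by omega)]; norm_num
  have hx2 : gmap m (w0 m) (⟨2, by omega⟩ : Fin (m+1)) = 1/8 := by
    rw [hcoord 2 (by omega)]; norm_num
  set x3 : ℝ := gmap m (w0 m) (⟨3, by omega⟩ : Fin (m+1)) with hx3def
  have hx3 : 0 < x3 ∧ x3 ^ 2 ≠ (1/8 : ℝ) ^ 2 := by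
    by_cases h3 : 3 < m
    · have : x3 = (1/2 : ℝ) ^ 4 := by rw [hx3def, hcoord 3 (by omega)]
      rw [this]; norm_num
    · have hm3 : m = 3 := by omega
      subst hm3
      have hlast : (⟨3, by omega⟩ : Fin 4) = Fin.last 3 := rfl
      have hx3v : x3 = Real.sqrt (1 - ∑ j, w0 3 j ^ 2) := by rw [hx3def, hlast, gmap_last]
      have hs := w0_sum_le 3
      have h1 : (1/2 : ℝ) ≤ 1 - ∑ j, w0 3 j ^ 2 := by linarith
      have hpos : 0 < x3 := by
        rw [hx3v]; exact Real.sqrt_pos.2 (by linarith)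
      refine ⟨hpos, ?_⟩
      have : x3 ^ 2 = 1 - ∑ j, w0 3 j ^ 2 := by
        rw [hx3v, Real.sq_sqrt (by linarith)]
      rw [this]
      intro hcontra
      rw [hcontra] at h1
      norm_num at h1
  obtain ⟨hx3pos, hx3ne⟩ := hx3
  rw [eval_Fp, hx0, hx1, hx2, ← hx3def]
  have hbase : (1/2 : ℝ) * (1/4) * ((1/2) ^ 2 - (1/4) ^ 2) *
      ((1/8) * x3 * ((1/8) ^ 2 - x3 ^ 2)) ≠ 0 := by
    have h1 : ((1/8 : ℝ) ^ 2 - x3 ^ 2) ≠ 0 := fun h => hx3ne (by linarith [sub_eq_zero.1 h])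
    have h2 : (1/8 : ℝ) * x3 * ((1/8) ^ 2 - x3 ^ 2) ≠ 0 :=
      mul_ne_zero (mul_ne_zero (by norm_num) hx3pos.ne') h1
    exact mul_ne_zero (by norm_num) h2
  have hsq : 0 < ((1/2 : ℝ) * (1/4) * ((1/2) ^ 2 - (1/4) ^ 2) *
      ((1/8) * x3 * ((1/8) ^ 2 - x3 ^ 2))) ^ 2 := sq_pos_of_ne_zero hbase
  nlinarith [sq_nonneg ((1/2 : ℝ) * (1/8) * ((1/2) ^ 2 - (1/8) ^ 2) *
      ((1/4) * x3 * ((1/4) ^ 2 - x3 ^ 2))),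
    sq_nonneg ((1/2 : ℝ) * x3 * ((1/2) ^ 2 - x3 ^ 2) * ((1/4) * (1/8) * ((1/4) ^ 2 - (1/8) ^ 2)))]

/-! ### Positivity of the Hausdorff measure of balls in Euclidean space -/

lemma pi_haus (m : ℕ) : (volume : Measure (Fin m → ℝ)) = μH[(m : ℝ)] := by
  rw [← MeasureTheory.hausdorffMeasure_pi_real (ι := Fin m), Fintype.card_fin]

lemma ball_lower {m : ℕ} (w : EuclideanSpace ℝ (Fin m)) {δ : ℝ} (hδ : 0 < δ) :
    0 < μH[(m : ℝ)] (Metric.ball w δ) := by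
  set e := WithLp.equiv 2 (Fin m → ℝ) with he
  obtain ⟨K, hanti⟩ : ∃ K, AntilipschitzWith K (⇑e) := ⟨_, PiLp.antilipschitzWith_ofLp 2 _⟩
  have hlip : LipschitzWith 1 (⇑e) := PiLp.lipschitzWith_ofLp 2 _
  set δ' : ℝ := δ / (K + 1) with hδ'def
  have hK1 : (0:ℝ) < (K:ℝ) + 1 := by positivity
  have hδ' : 0 < δ' := div_pos hδ hK1
  have hBsub : Metric.ball (e w) δ' ⊆ ⇑e '' Metric.ball w δ := by
    intro x hx
    refine ⟨e.symm x, ?_, by simp⟩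
    rw [Metric.mem_ball] at hx ⊢
    have h1 : dist (e.symm x) w ≤ (K:ℝ) * dist (e (e.symm x)) (e w) := hanti.le_mul_dist _ _
    rw [Equiv.apply_symm_apply] at h1
    have h2 : (K:ℝ) * dist x (e w) ≤ (K:ℝ) * δ' :=
      mul_le_mul_of_nonneg_left hx.le (by positivity)
    have h3 : (K:ℝ) * δ' = δ - δ' := by
      rw [hδ'def]; field_simp; ring
    linarith
  have hvol : 0 < volume (Metric.ball (e w) δ') := Metric.measure_ball_pos _ _ hδ'
  rw [pi_haus] at hvol
  have h4 : μH[(m : ℝ)] (Metric.ball (e w) δ') ≤ μH[(m : ℝ)] (⇑e '' Metric.ball w δ) :=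
    measure_mono hBsub
  have h5 := hlip.hausdorffMeasure_image_le (d := (m:ℝ)) (Nat.cast_nonneg m) (Metric.ball w δ)
  simp only [ENNReal.coe_one, ENNReal.one_rpow, one_mul] at h5
  exact lt_of_lt_of_le hvol (h4.trans h5)

/-! ### The support of the obstruction polynomial meets the sphere in positive measure -/

lemma support_measure_pos (m : ℕ) (hm : 3 ≤ m) :
    0 < μH[(m : ℝ)] (Function.support
        (fun x : EuclideanSpace ℝ (Fin (m+1)) =>
          eval (fun i => x i)
            (Fp (⟨0, by omega⟩ : Fin (m+1)) ⟨1, by omega⟩ ⟨2, by omega⟩ ⟨3, by omega⟩)) ∩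
      Metric.sphere 0 1) := by
  set F := Fp (⟨0, by omega⟩ : Fin (m+1)) ⟨1, by omega⟩ ⟨2, by omega⟩ ⟨3, by omega⟩ with hF
  set f : EuclideanSpace ℝ (Fin (m+1)) → ℝ := fun x => eval (fun i => x i) F with hf
  set φ : EuclideanSpace ℝ (Fin m) → ℝ := fun w => f (gmap m w) with hφ
  have hφcont : Continuous φ := cont_eval F (gmap m) (gmap_continuous_coord m)
  have hScont : Continuous fun w : EuclideanSpace ℝ (Fin m) => ∑ j, w j ^ 2 :=
    continuous_finset_sum _ fun j _ => ((continuous_apply j).comp (PiLp.continuous_ofLp 2 _)).pow 2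
  set V : Set (EuclideanSpace ℝ (Fin m)) :=
    {w | (∑ j, w j ^ 2) < 1} ∩ {w | 0 < φ w} with hV
  have hVopen : IsOpen V :=
    (isOpen_lt hScont continuous_const).inter (isOpen_lt continuous_const hφcont)
  have hw0V : w0 m ∈ V := by
    constructor
    · have := w0_sum_le m
      simp only [Set.mem_setOf_eq]
      linarith
    · exact phi_w0_pos m hm
  obtain ⟨δ, hδ, hball⟩ := Metric.isOpen_iff.1 hVopen (w0 m) hw0V
  have hsub : gmap m '' Metric.ball (w0 m) δ ⊆
      Function.support f ∩ Metric.sphere 0 1 := by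
    rintro x ⟨w, hw, rfl⟩
    have hwV := hball hw
    constructor
    · exact Function.mem_support.2 (ne_of_gt hwV.2)
    · exact gmap_mem_sphere m w hwV.1.le
  have h1 := (gmap_antilipschitz m).le_hausdorffMeasure_image (d := (m:ℝ))
    (Nat.cast_nonneg m) (Metric.ball (w0 m) δ)
  simp only [ENNReal.coe_one, ENNReal.one_rpow, one_mul] at h1
  calc (0 : ℝ≥0∞) < μH[(m : ℝ)] (Metric.ball (w0 m) δ) := ball_lower _ hδ
    _ ≤ μH[(m : ℝ)] (gmap m '' Metric.ball (w0 m) δ) := h1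
    _ ≤ _ := measure_mono hsub

end DegreeBoundAux

open DegreeBoundAux MvPolynomial in
/-- Uniform degree bound for weighted designs of generalized corner-vector type,
`n ≥ 4`. -/
theorem degree_bound (n t : ℕ) (hn : 4 ≤ n)
    (h : ∃ (k : ℕ) (a : Fin k → ℝ) (s : Fin k → ℕ) (W : Fin k → ℝ),
      1 ≤ k ∧ (∀ i, 0 < a i) ∧ (∀ i, s i ≤ n - 1) ∧ (∀ i, 0 < W i) ∧
      isDesign n t k a s W) :
    t ≤ 15 := by
  obtain ⟨k, a, s, W, hk, ha, hs, hW, hD⟩ := h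
  obtain ⟨m, rfl⟩ : ∃ m, n = m + 1 := ⟨n - 1, by omega⟩
  have hm : 3 ≤ m := by omega
  set S : Set (EuclideanSpace ℝ (Fin (m+1))) := Metric.sphere 0 1 with hS
  have hexp : ((m + 1 : ℕ) : ℝ) - 1 = (m : ℝ) := by push_cast; ring
  set μ : Measure (EuclideanSpace ℝ (Fin (m+1))) := μH[(m : ℝ)] with hμ
  have hμeq : (μH[((m + 1 : ℕ) : ℝ) - 1] : Measure (EuclideanSpace ℝ (Fin (m+1)))) = μ := by
    rw [hμ, hexp]
  -- Step 1: applying the design to the constant polynomial 1 shows `(μ S).toReal ≠ 0`.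
  have hNek : Nonempty (Fin k) := ⟨⟨0, hk⟩⟩
  have hD1 := hD 1 (by simp)
  have hcard : ∀ i : Fin k, orbitSum (m+1) (a i) (s i) 1 =
      ((cornerOrbit (m+1) (a i) (s i)).card : ℝ) := by
    intro i
    simp [orbitSum]
  have hcardpos : ∀ i : Fin k, 0 < ((cornerOrbit (m+1) (a i) (s i)).card : ℝ) := by
    intro i
    have : (cornerOrbit (m+1) (a i) (s i)).Nonempty := by
      unfold cornerOrbit
      exact (@Finset.image_nonempty _ _ (Classical.decEq _) _ _).2 Finset.univ_nonempty
    exact_mod_cast Finset.card_pos.2 this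
  have hRHS1 : 0 < ∑ i, W i * orbitSum (m+1) (a i) (s i) 1 := by
    apply Finset.sum_pos
    · intro i _
      rw [hcard i]
      exact mul_pos (hW i) (hcardpos i)
    · exact Finset.univ_nonempty
  rw [sphereAvg] at hD1
  simp only [map_one] at hD1
  rw [hμeq, setAverage_eq, setIntegral_const, smul_eq_mul, smul_eq_mul, mul_one] at hD1
  have hMne : (μ S).toReal ≠ 0 := by
    intro h0
    rw [measureReal_def, ← hS, h0] at hD1
    simp at hD1
    rw [← hD1] at hRHS1
    exact lt_irrefl _ hRHS1
  have hMpos : 0 < (μ S).toReal := lt_of_le_of_ne ENNReal.toReal_nonneg (Ne.symm hMne)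
  -- Step 2: suppose `t ≥ 16`; apply the design to the obstruction polynomial.
  by_contra htle
  push_neg at htle
  set F := Fp (⟨0, by omega⟩ : Fin (m+1)) ⟨1, by omega⟩ ⟨2, by omega⟩ ⟨3, by omega⟩ with hF
  have hdeg : F.totalDegree ≤ t := (Fp_totalDegree _ _ _ _).trans (by omega)
  have hD2 := hD F hdeg
  have hne : ∀ (u v : ℕ) (hu : u < m + 1) (hv : v < m + 1), u ≠ v →
      (⟨u, hu⟩ : Fin (m+1)) ≠ ⟨v, hv⟩ := by
    intro u v hu hv huv
    simp [Fin.ext_iff, huv]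
  have horbF : ∀ i : Fin k, orbitSum (m+1) (a i) (s i) F = 0 := by
    intro i
    apply Finset.sum_eq_zero
    intro y hy
    exact eval_Fp_orbit (hne 0 1 (by omega) (by omega) (by omega))
      (hne 0 2 (by omega) (by omega) (by omega)) (hne 0 3 (by omega) (by omega) (by omega))
      (hne 1 2 (by omega) (by omega) (by omega)) (hne 1 3 (by omega) (by omega) (by omega))
      (hne 2 3 (by omega) (by omega) (by omega)) hy
  rw [sphereAvg, hμeq, setAverage_eq] at hD2
  simp only [horbF, mul_zero, Finset.sum_const_zero] at hD2
  -- The integral of the obstruction polynomial over the sphere is positive.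
  set f : EuclideanSpace ℝ (Fin (m+1)) → ℝ := fun x => eval (fun i => x i) F with hf
  have hfcont : Continuous f := cont_eval F (fun x => x) (fun i => (continuous_apply i).comp (PiLp.continuous_ofLp 2 _))
  have hSmeas : MeasurableSet S := Metric.isClosed_sphere.measurableSet
  have hfin : IsFiniteMeasure (μ.restrict S) := by
    constructor
    rw [Measure.restrict_apply_univ]
    exact (ENNReal.toReal_pos_iff.1 hMpos).2
  obtain ⟨C, hC⟩ := (isCompact_sphere (0 : EuclideanSpace ℝ (Fin (m+1))) 1).exists_bound_of_continuousOn
    hfcont.continuousOn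
  have hInt : IntegrableOn f S μ := by
    refine Integrable.mono' (integrable_const C) hfcont.aestronglyMeasurable ?_
    refine (ae_restrict_iff' hSmeas).2 (ae_of_all _ fun x hx => ?_)
    exact hC x hx
  have h0 : 0 ≤ᵐ[μ.restrict S] f := ae_of_all _ fun x => Fp_nonneg _ _ _ _ _
  have hIntPos : 0 < ∫ x in S, f x ∂μ := by
    rw [setIntegral_pos_iff_support_of_nonneg_ae h0 hInt]
    exact support_measure_pos m hm
  have hpos2 : 0 < (μ S).toReal⁻¹ * ∫ x in S, f x ∂μ :=
    mul_pos (inv_pos.2 hMpos) hIntPos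
  rw [smul_eq_mul, measureReal_def, ← hS] at hD2
  rw [hD2] at hpos2
  exact lt_irrefl _ hpos2
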